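/- The group obtained from the presentation of G(Ẽ₇^{(1,1)}) by adding the quadratic relations g² = 1 for every generator t₀, t₁, s₁, …, s₇ is isomorphic to the group obtained from the presentation of G'(Ẽ₇^{(1,1)}) by adding the quadratic relations tᵢ² = 1 for all i ∈ ℤ and sⱼ² = 1 for j ∈ {1,…,7} (both present the hyperbolic elliptic Weyl group Hyp(Ẽ₇^{(1,1)})). -/

import Mathlib

/-!
STATEMENT 10: The group obtained from the presentation of G(Ẽ₇^{(1,1)}) by adding the
quadratic relations g² = 1 for every generator is isomorphic to the group obtained
from the presentation of G'(Ẽ₇^{(1,1)}) by adding the quadratic relations tᵢ² = 1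
(i ∈ ℤ) and sⱼ² = 1; both present Hyp(Ẽ₇^{(1,1)}).
-/

namespace EllipticE7Hyp

/-- Generators of `G(Ẽ₇^{(1,1)})`: `Sum.inl i` is `tᵢ` (`i ∈ {0,1}`),
`Sum.inr j` is `s_(j+1)` (so `Sum.inr 0` is `s₁`, ..., `Sum.inr 6` is `s₇`). -/
abbrev GenG : Type := Fin 2 ⊕ Fin 7

/-- Generators of `G'(Ẽ₇^{(1,1)})`: `Sum.inl i` is `tᵢ` (`i ∈ ℤ`),
`Sum.inr j` is `s_(j+1)`. -/
abbrev GenG' : Type := ℤ ⊕ Fin 7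

/-- The braid relator `(aba)⁻¹(bab)` encoding the relation `aba = bab`. -/
def br {α : Type} (a b : FreeGroup α) : FreeGroup α := (a * b * a)⁻¹ * (b * a * b)

/-- The commutation relator `(ab)⁻¹(ba)` encoding the relation `ab = ba`. -/
def cm {α : Type} (a b : FreeGroup α) : FreeGroup α := (a * b)⁻¹ * (b * a)

/-- The pairs of (0-indexed) `s`-generators joined by an edge in the diagram,
i.e. satisfying a braid relation: (s₂,s₄), (s₄,s₅), (s₃,s₆), (s₆,s₇). -/
def braidPairs : List (Fin 7 × Fin 7) := [(1, 3), (3, 4), (2, 5), (5, 6)]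

def tG (i : Fin 2) : FreeGroup GenG := FreeGroup.of (Sum.inl i)
def sG (j : Fin 7) : FreeGroup GenG := FreeGroup.of (Sum.inr j)

/-- Relators of the elliptic Dynkin presentation of `G(Ẽ₇^{(1,1)})`:
braid relations between `t₀, t₁` and `s₁, s₂, s₃`, braid relations along the edges
of the `s`-part of the diagram, the elliptic relations for `s₁, s₂, s₃`, and
commutation relations for all remaining pairs of distinct generators except `{t₀,t₁}`. -/
def relsG : Set (FreeGroup GenG) :=
  { r | (∃ i : Fin 2, ∃ j : Fin 7, j.val < 3 ∧ r = br (tG i) (sG j)) ∨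
        (∃ p ∈ braidPairs, r = br (sG p.1) (sG p.2)) ∨
        (∃ j : Fin 7, j.val < 3 ∧
          r = (sG j * tG 1 * tG 0 * sG j * tG 1 * tG 0)⁻¹ *
              (tG 1 * tG 0 * sG j * tG 1 * tG 0 * sG j)) ∨
        (∃ i j : Fin 7, i ≠ j ∧ (i, j) ∉ braidPairs ∧ (j, i) ∉ braidPairs ∧
          r = cm (sG i) (sG j)) ∨
        (∃ i : Fin 2, ∃ j : Fin 7, 3 ≤ j.val ∧ r = cm (tG i) (sG j)) }

def tG' (i : ℤ) : FreeGroup GenG' := FreeGroup.of (Sum.inl i)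
def sG' (j : Fin 7) : FreeGroup GenG' := FreeGroup.of (Sum.inr j)

/-- Relators of the new presentation of `G'(Ẽ₇^{(1,1)})`: braid relations between
every `tᵢ` (`i ∈ ℤ`) and `s₁, s₂, s₃`, the relations `tᵢtᵢ₋₁ = tⱼtⱼ₋₁`, braid relations
along the edges of the `s`-part of the diagram, commutation relations between the
remaining pairs of distinct `s`-generators, and commutation of every `tᵢ` with
`s₄, …, s₇`. -/
def relsG' : Set (FreeGroup GenG') :=
  { r | (∃ i : ℤ, ∃ j : Fin 7, j.val < 3 ∧ r = br (tG' i) (sG' j)) ∨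
        (∃ i j : ℤ, r = (tG' i * tG' (i - 1))⁻¹ * (tG' j * tG' (j - 1))) ∨
        (∃ p ∈ braidPairs, r = br (sG' p.1) (sG' p.2)) ∨
        (∃ i j : Fin 7, i ≠ j ∧ (i, j) ∉ braidPairs ∧ (j, i) ∉ braidPairs ∧
          r = cm (sG' i) (sG' j)) ∨
        (∃ i : ℤ, ∃ j : Fin 7, 3 ≤ j.val ∧ r = cm (tG' i) (sG' j)) }

/-- Relators of the `G`-presentation together with the quadratic relators `g² = 1`
for every generator. -/
def relsHypG : Set (FreeGroup GenG) :=
  relsG ∪ { r | ∃ x : GenG, r = (FreeGroup.of x) ^ 2 }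

/-- Relators of the `G'`-presentation together with the quadratic relators `tᵢ² = 1`
for all `i ∈ ℤ` and `sⱼ² = 1` for all `j`. -/
def relsHypG' : Set (FreeGroup GenG') :=
  relsG' ∪ { r | ∃ x : GenG', r = (FreeGroup.of x) ^ 2 }

-- ### auxiliary development

section Extract
variable {α : Type} {rels : Set (FreeGroup α)}

lemma rel_one {r : FreeGroup α} (h : r ∈ rels) : PresentedGroup.mk rels r = 1 :=
  (QuotientGroup.eq_one_iff r).2 (Subgroup.subset_normalClosure h)

lemma br_eq {x y : FreeGroup α} (h : br x y ∈ rels) :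
    PresentedGroup.mk rels x * PresentedGroup.mk rels y * PresentedGroup.mk rels x =
      PresentedGroup.mk rels y * PresentedGroup.mk rels x * PresentedGroup.mk rels y := by
  have h1 := rel_one h
  simp only [br, map_mul, map_inv] at h1
  exact inv_mul_eq_one.mp h1

lemma cm_eq {x y : FreeGroup α} (h : cm x y ∈ rels) :
    PresentedGroup.mk rels x * PresentedGroup.mk rels y =
      PresentedGroup.mk rels y * PresentedGroup.mk rels x := by
  have h1 := rel_one h
  simp only [cm, map_mul, map_inv] at h1
  exact inv_mul_eq_one.mp h1

lemma sq_eq {x : α} (h : (FreeGroup.of x) ^ 2 ∈ rels) :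
    (PresentedGroup.of x : PresentedGroup rels) * PresentedGroup.of x = 1 := by
  have h1 := rel_one h
  simp only [sq, map_mul] at h1
  exact h1

end Extract

abbrev HG := PresentedGroup relsHypG
abbrev HG' := PresentedGroup relsHypG'

-- generators
def AA : HG := PresentedGroup.of (Sum.inl 0)
def BB : HG := PresentedGroup.of (Sum.inl 1)
def SS (j : Fin 7) : HG := PresentedGroup.of (Sum.inr j)
def TT' (i : ℤ) : HG' := PresentedGroup.of (Sum.inl i)
def SS' (j : Fin 7) : HG' := PresentedGroup.of (Sum.inr j)

lemma mem_relsHypG {r : FreeGroup GenG} (h : r ∈ relsG) : r ∈ relsHypG := Or.inl h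
lemma mem_relsHypG' {r : FreeGroup GenG'} (h : r ∈ relsG') : r ∈ relsHypG' := Or.inl h

-- G toolkit
lemma G_sq (x : GenG) : (PresentedGroup.of x : HG) * PresentedGroup.of x = 1 :=
  sq_eq (Or.inr ⟨x, rfl⟩)

lemma G_braid_ts (i : Fin 2) (j : Fin 7) (hj : j.val < 3) :
    (PresentedGroup.of (Sum.inl i) : HG) * PresentedGroup.of (Sum.inr j) *
        PresentedGroup.of (Sum.inl i) =
      PresentedGroup.of (Sum.inr j) * PresentedGroup.of (Sum.inl i) *
        PresentedGroup.of (Sum.inr j) :=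
  br_eq (mem_relsHypG (Or.inl ⟨i, j, hj, rfl⟩))

lemma G_braid_ss {p : Fin 7 × Fin 7} (hp : p ∈ braidPairs) :
    (SS p.1) * SS p.2 * SS p.1 = SS p.2 * SS p.1 * SS p.2 :=
  br_eq (mem_relsHypG (Or.inr (Or.inl ⟨p, hp, rfl⟩)))

lemma G_ell (j : Fin 7) (hj : j.val < 3) :
    SS j * BB * AA * SS j * BB * AA = BB * AA * SS j * BB * AA * SS j := by
  have h1 := rel_one (rels := relsHypG) (mem_relsHypG
    (Or.inr (Or.inr (Or.inl ⟨j, hj, rfl⟩))))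
  simp only [map_mul, map_inv] at h1
  exact inv_mul_eq_one.mp h1

lemma G_cm_ss {i j : Fin 7} (hne : i ≠ j) (h1 : (i, j) ∉ braidPairs)
    (h2 : (j, i) ∉ braidPairs) : SS i * SS j = SS j * SS i :=
  cm_eq (mem_relsHypG (Or.inr (Or.inr (Or.inr (Or.inl ⟨i, j, hne, h1, h2, rfl⟩)))))

lemma G_cm_ts (i : Fin 2) {j : Fin 7} (hj : 3 ≤ j.val) :
    (PresentedGroup.of (Sum.inl i) : HG) * SS j = SS j * PresentedGroup.of (Sum.inl i) :=
  cm_eq (mem_relsHypG (Or.inr (Or.inr (Or.inr (Or.inr ⟨i, j, hj, rfl⟩)))))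

-- G' toolkit
lemma G'_sq (x : GenG') : (PresentedGroup.of x : HG') * PresentedGroup.of x = 1 :=
  sq_eq (Or.inr ⟨x, rfl⟩)

lemma G'_braid_ts (i : ℤ) (j : Fin 7) (hj : j.val < 3) :
    TT' i * SS' j * TT' i = SS' j * TT' i * SS' j :=
  br_eq (mem_relsHypG' (Or.inl ⟨i, j, hj, rfl⟩))

lemma G'_tt (i j : ℤ) : TT' i * TT' (i - 1) = TT' j * TT' (j - 1) := by
  have h1 := rel_one (rels := relsHypG') (mem_relsHypG'
    (Or.inr (Or.inl ⟨i, j, rfl⟩)))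
  simp only [map_mul, map_inv] at h1
  exact inv_mul_eq_one.mp h1

lemma G'_braid_ss {p : Fin 7 × Fin 7} (hp : p ∈ braidPairs) :
    (SS' p.1) * SS' p.2 * SS' p.1 = SS' p.2 * SS' p.1 * SS' p.2 :=
  br_eq (mem_relsHypG' (Or.inr (Or.inr (Or.inl ⟨p, hp, rfl⟩))))

lemma G'_cm_ss {i j : Fin 7} (hne : i ≠ j) (h1 : (i, j) ∉ braidPairs)
    (h2 : (j, i) ∉ braidPairs) : SS' i * SS' j = SS' j * SS' i :=
  cm_eq (mem_relsHypG' (Or.inr (Or.inr (Or.inr (Or.inl ⟨i, j, hne, h1, h2, rfl⟩)))))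

lemma G'_cm_ts (i : ℤ) {j : Fin 7} (hj : 3 ≤ j.val) :
    TT' i * SS' j = SS' j * TT' i :=
  cm_eq (mem_relsHypG' (Or.inr (Or.inr (Or.inr (Or.inr ⟨i, j, hj, rfl⟩)))))


section GroupLemmas
variable {G : Type*} [Group G]

lemma tailr {y z : G} (e : y = z) (x : G) : y * x = z * x := by rw [e]

lemma inv_of_inv (g : G) (h : g * g = 1) : g⁻¹ = g := inv_eq_of_mul_eq_one_right h

lemma conj_zpow' (g x : G) (hg : g * g = 1) (k : ℤ) :
    g * x ^ k * g = (g * x * g) ^ k := by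
  have hinv : g⁻¹ = g := inv_of_inv g hg
  have h1 : (g * x * g) ^ k = (MulAut.conj g x) ^ k := by
    rw [MulAut.conj_apply, hinv]
  rw [h1, ← map_zpow, MulAut.conj_apply, hinv]

/-- `b * (b*a)^k * b = (b*a)^(-k)`. -/
lemma bck (a b : G) (ha : a * a = 1) (hb : b * b = 1) (k : ℤ) :
    b * (b * a) ^ k * b = (b * a) ^ (-k) := by
  have h1 : b * (b * a) * b = (b * a)⁻¹ := by
    rw [mul_inv_rev, inv_of_inv a ha, inv_of_inv b hb, ← mul_assoc, hb, one_mul]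
  rw [conj_zpow' b (b * a) hb k, h1, inv_zpow, zpow_neg]

/-- `((b*a)^(k) * b)^2 = 1`. -/
lemma tt_sq (a b : G) (ha : a * a = 1) (hb : b * b = 1) (k : ℤ) :
    ((b * a) ^ k * b) * ((b * a) ^ k * b) = 1 := by
  have := bck a b ha hb k
  calc ((b * a) ^ k * b) * ((b * a) ^ k * b) = (b * a) ^ k * (b * (b * a) ^ k * b) := by group
    _ = (b * a) ^ k * (b * a) ^ (-k) := by rw [this]
    _ = 1 := by group

/-- `((b*a)^(i-1) * b) * ((b*a)^(i-2) * b) = b * a`. -/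
lemma tt_mul (a b : G) (ha : a * a = 1) (hb : b * b = 1) (i : ℤ) :
    ((b * a) ^ (i - 1) * b) * ((b * a) ^ (i - 2) * b) = b * a := by
  have := bck a b ha hb (i - 2)
  calc ((b * a) ^ (i - 1) * b) * ((b * a) ^ (i - 2) * b)
      = (b * a) ^ (i - 1) * (b * (b * a) ^ (i - 2) * b) := by group
    _ = (b * a) ^ (i - 1) * (b * a) ^ (-(i - 2)) := by rw [this]
    _ = (b * a) ^ ((i - 1) + -(i - 2)) := by rw [zpow_add]
    _ = b * a := by norm_num

/-- commutation of `(b*a)^k * b` with `s` when `a`, `b` commute with `s`. -/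
lemma tt_comm (a b s : G) (has : a * s = s * a) (hbs : b * s = s * b) (k : ℤ) :
    ((b * a) ^ k * b) * s = s * ((b * a) ^ k * b) := by
  have h1 : Commute s a := has.symm
  have h2 : Commute s b := hbs.symm
  have h3 : Commute s ((b * a) ^ k * b) := ((h2.mul_right h1).zpow_right k).mul_right h2
  exact h3.symm

/-- The key braid lemma. -/
lemma braid_family (a b s : G) (ha : a * a = 1) (hb : b * b = 1) (hs : s * s = 1)
    (has : a * s * a = s * a * s) (hbs : b * s * b = s * b * s)
    (hell : s * (b * a) * s * (b * a) = b * a * s * (b * a) * s) (k : ℤ) :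
    ((b * a) ^ k * b) * s * ((b * a) ^ k * b) = s * ((b * a) ^ k * b) * s := by
  have ha2 : ∀ x : G, a * (a * x) = x := fun x => by
    simpa [mul_assoc] using tailr ha x
  have hb2 : ∀ x : G, b * (b * x) = x := fun x => by
    simpa [mul_assoc] using tailr hb x
  have hs2 : ∀ x : G, s * (s * x) = x := fun x => by
    simpa [mul_assoc] using tailr hs x
  have has2 : ∀ x : G, a * (s * (a * x)) = s * (a * (s * x)) := fun x => by
    simpa [mul_assoc] using tailr has x
  have hbs2 : ∀ x : G, b * (s * (b * x)) = s * (b * (s * x)) := fun x => by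
    simpa [mul_assoc] using tailr hbs x
  have hell2 : ∀ x : G, b * (a * (s * (b * (a * (s * x))))) =
      s * (b * (a * (s * (b * (a * x))))) := fun x => by
    simpa [mul_assoc] using tailr hell.symm x
  -- the hard identity: c v c⁻¹ = u v, as words: babsbab = sbasbsb
  have HL : b * (a * (b * (s * (b * (a * b))))) = s * (b * (a * (s * (b * (s * b))))) := by
    calc b * (a * (b * (s * (b * (a * b)))))
        = b * (a * (b * (s * (b * (a * (s * (s * b))))))) := by rw [hs2]
      _ = b * (a * (s * (b * (s * (a * (s * (s * b))))))) := by rw [hbs2]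
      _ = b * (a * (s * (b * (a * (s * (a * (s * b))))))) := by rw [← has2]
      _ = s * (b * (a * (s * (b * (a * (a * (s * b))))))) := by rw [hell2]
      _ = s * (b * (a * (s * (b * (s * b))))) := by rw [ha2]
  set c := b * a with hc
  have hcinv : c⁻¹ = a * b := by
    rw [hc, mul_inv_rev, inv_of_inv a ha, inv_of_inv b hb]
  -- hCV : c * v = u * v * c  where v = b*s*b, u = s*c*s
  have hCV : c * (b * s * b) = (s * c * s) * (b * s * b) * c := by
    have h1 : c * (b * s * b) * c⁻¹ = (s * c * s) * (b * s * b) := by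
      rw [hcinv, hc]
      calc b * a * (b * s * b) * (a * b) = b * (a * (b * (s * (b * (a * b))))) := by
            simp [mul_assoc]
        _ = s * (b * (a * (s * (b * (s * b))))) := HL
        _ = s * (b * a) * s * (b * s * b) := by simp [mul_assoc]
    calc c * (b * s * b) = (c * (b * s * b) * c⁻¹) * c := by group
      _ = (s * c * s) * (b * s * b) * c := by rw [h1]
  have hcu : c * (s * c * s) = (s * c * s) * c := by
    have h := hell
    simp only [mul_assoc] at h ⊢
    exact h.symm
  have hcuC : Commute c (s * c * s) := hcu
  have hC'V : c⁻¹ * (b * s * b) = (s * c * s)⁻¹ * (b * s * b) * c⁻¹ := by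
    have h1 : (s * c * s) * (c⁻¹ * (b * s * b)) = (b * s * b) * c⁻¹ := by
      calc (s * c * s) * (c⁻¹ * (b * s * b)) = c⁻¹ * ((s * c * s) * (b * s * b)) := by
            rw [← mul_assoc, ← (hcuC.inv_left).eq, mul_assoc]
        _ = c⁻¹ * (c * (b * s * b) * c⁻¹) := by
            rw [show (s * c * s) * (b * s * b) = c * (b * s * b) * c⁻¹ from by
              rw [hCV]; group]
        _ = (b * s * b) * c⁻¹ := by group
    calc c⁻¹ * (b * s * b) = (s * c * s)⁻¹ * ((s * c * s) * (c⁻¹ * (b * s * b))) := by group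
      _ = (s * c * s)⁻¹ * ((b * s * b) * c⁻¹) := by rw [h1]
      _ = (s * c * s)⁻¹ * (b * s * b) * c⁻¹ := by group
  have P : ∀ m : ℤ, c ^ m * (b * s * b) = (s * c * s) ^ m * (b * s * b) * c ^ m := by
    intro m
    induction m using Int.induction_on with
    | zero => simp
    | succ i ih =>
        have hcui : c * (s * c * s) ^ (i : ℤ) = (s * c * s) ^ (i : ℤ) * c :=
          (hcuC.zpow_right (i : ℤ)).eq
        calc c ^ ((i : ℤ) + 1) * (b * s * b) = c * (c ^ (i : ℤ) * (b * s * b)) := by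
              rw [zpow_add_one]; group
          _ = c * ((s * c * s) ^ (i : ℤ) * (b * s * b) * c ^ (i : ℤ)) := by rw [ih]
          _ = (c * (s * c * s) ^ (i : ℤ)) * (b * s * b) * c ^ (i : ℤ) := by group
          _ = ((s * c * s) ^ (i : ℤ) * c) * (b * s * b) * c ^ (i : ℤ) := by rw [hcui]
          _ = (s * c * s) ^ (i : ℤ) * (c * (b * s * b)) * c ^ (i : ℤ) := by group
          _ = (s * c * s) ^ (i : ℤ) * ((s * c * s) * (b * s * b) * c) * c ^ (i : ℤ) := by
              rw [hCV]
          _ = (s * c * s) ^ ((i : ℤ) + 1) * (b * s * b) * c ^ ((i : ℤ) + 1) := by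
              rw [zpow_add_one, zpow_add_one]; group
    | pred i ih =>
        have hcui : c⁻¹ * (s * c * s) ^ (-(i : ℤ)) = (s * c * s) ^ (-(i : ℤ)) * c⁻¹ :=
          ((hcuC.zpow_right (-(i : ℤ))).inv_left).eq
        calc c ^ (-(i : ℤ) - 1) * (b * s * b) = c⁻¹ * (c ^ (-(i : ℤ)) * (b * s * b)) := by
              rw [zpow_sub_one]; group
          _ = c⁻¹ * ((s * c * s) ^ (-(i : ℤ)) * (b * s * b) * c ^ (-(i : ℤ))) := by rw [ih]
          _ = (c⁻¹ * (s * c * s) ^ (-(i : ℤ))) * (b * s * b) * c ^ (-(i : ℤ)) := by group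
          _ = ((s * c * s) ^ (-(i : ℤ)) * c⁻¹) * (b * s * b) * c ^ (-(i : ℤ)) := by rw [hcui]
          _ = (s * c * s) ^ (-(i : ℤ)) * (c⁻¹ * (b * s * b)) * c ^ (-(i : ℤ)) := by group
          _ = (s * c * s) ^ (-(i : ℤ)) * ((s * c * s)⁻¹ * (b * s * b) * c⁻¹) * c ^ (-(i : ℤ)) := by
              rw [hC'V]
          _ = (s * c * s) ^ (-(i : ℤ) - 1) * (b * s * b) * c ^ (-(i : ℤ) - 1) := by
              rw [zpow_sub_one, zpow_sub_one]; group
  -- assembly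
  have hBC := bck a b ha hb k
  rw [← hc] at hBC
  have hSC : s * c ^ k * s = (s * c * s) ^ k := conj_zpow' s c hs k
  calc (c ^ k * b) * s * (c ^ k * b)
      = c ^ k * (b * s * b) * (b * c ^ k * b) := by
        have : ∀ x : G, b * (b * x) = x := hb2
        calc (c ^ k * b) * s * (c ^ k * b) = c ^ k * (b * (s * (b * (b * (c ^ k * b))))) := by
              rw [hb2]; simp [mul_assoc]
          _ = c ^ k * (b * s * b) * (b * c ^ k * b) := by simp [mul_assoc]
    _ = c ^ k * (b * s * b) * c ^ (-k) := by rw [hBC]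
    _ = (s * c * s) ^ k * (b * s * b) := by
        rw [P k]; group
    _ = (s * c ^ k * s) * (b * s * b) := by rw [hSC]
    _ = s * (c ^ k * b) * s := by
        rw [hbs]
        calc s * c ^ k * s * (s * b * s) = s * (c ^ k * (s * (s * (b * s)))) := by
              simp [mul_assoc]
          _ = s * (c ^ k * (b * s)) := by rw [hs2]
          _ = s * (c ^ k * b) * s := by simp [mul_assoc]

/-- elliptic relation from three consecutive `t`'s. -/
lemma ell_of_three (t0 t1 t2 s : G) (h21 : t2 * t1 = t1 * t0)
    (b0 : t0 * s * t0 = s * t0 * s) (b1 : t1 * s * t1 = s * t1 * s)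
    (b2 : t2 * s * t2 = s * t2 * s) :
    s * (t1 * t0) * s * (t1 * t0) = t1 * t0 * s * (t1 * t0) * s := by
  have h21' : ∀ x : G, t2 * (t1 * x) = t1 * (t0 * x) := fun x => by
    simpa [mul_assoc] using tailr h21 x
  have b0' : ∀ x : G, t0 * (s * (t0 * x)) = s * (t0 * (s * x)) := fun x => by
    simpa [mul_assoc] using tailr b0 x
  have b1' : ∀ x : G, t1 * (s * (t1 * x)) = s * (t1 * (s * x)) := fun x => by
    simpa [mul_assoc] using tailr b1 x
  have b2' : ∀ x : G, t2 * (s * (t2 * x)) = s * (t2 * (s * x)) := fun x => by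
    simpa [mul_assoc] using tailr b2 x
  have main : s * (t1 * (t0 * (s * (t1 * t0)))) = t1 * (t0 * (s * (t1 * (t0 * s)))) := by
    calc s * (t1 * (t0 * (s * (t1 * t0))))
        = s * (t2 * (t1 * (s * (t1 * t0)))) := by rw [h21']
      _ = s * (t2 * (s * (t1 * (s * t0)))) := by
          rw [show t1 * (s * (t1 * t0)) = s * (t1 * (s * t0)) from b1' t0]
      _ = t2 * (s * (t2 * (t1 * (s * t0)))) := by rw [b2']
      _ = t2 * (s * (t1 * (t0 * (s * t0)))) := by rw [h21']
      _ = t2 * (s * (t1 * (s * (t0 * s)))) := by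
          rw [show t0 * (s * t0) = s * (t0 * s) from by
            simpa [mul_assoc] using b0]
      _ = t2 * (t1 * (s * (t1 * (t0 * s)))) := by rw [← b1']
      _ = t1 * (t0 * (s * (t1 * (t0 * s)))) := by rw [h21']
  calc s * (t1 * t0) * s * (t1 * t0) = s * (t1 * (t0 * (s * (t1 * t0)))) := by
        simp [mul_assoc]
    _ = t1 * (t0 * (s * (t1 * (t0 * s)))) := main
    _ = t1 * t0 * s * (t1 * t0) * s := by simp [mul_assoc]

end GroupLemmas
-- derived lemmas in HG'

lemma T2' (i : ℤ) : TT' i * TT' i = 1 := G'_sq _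
lemma S2' (j : Fin 7) : SS' j * SS' j = 1 := G'_sq _
lemma A2 : AA * AA = 1 := G_sq _
lemma B2 : BB * BB = 1 := G_sq _
lemma S2 (j : Fin 7) : SS j * SS j = 1 := G_sq _

lemma G'_ell (j : Fin 7) (hj : j.val < 3) :
    SS' j * (TT' 1 * TT' 0) * SS' j * (TT' 1 * TT' 0) =
      TT' 1 * TT' 0 * SS' j * (TT' 1 * TT' 0) * SS' j := by
  have h21 : TT' 2 * TT' 1 = TT' 1 * TT' 0 := by
    have h := G'_tt 2 1
    norm_num at h
    exact h
  exact ell_of_three (TT' 0) (TT' 1) (TT' 2) (SS' j) h21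
    (G'_braid_ts 0 j hj) (G'_braid_ts 1 j hj) (G'_braid_ts 2 j hj)

lemma G'_T_eq (i : ℤ) : (TT' 1 * TT' 0) ^ (i - 1) * TT' 1 = TT' i := by
  induction i using Int.induction_on with
  | zero =>
    have h0 : ((0:ℤ) - 1) = -1 := by norm_num
    rw [h0, zpow_neg_one, mul_inv_rev, inv_of_inv _ (T2' 0), inv_of_inv _ (T2' 1),
      mul_assoc, T2' 1, mul_one]
  | succ i ih =>
    have hstep : TT' ((i : ℤ) + 1) * TT' i = TT' 1 * TT' 0 := by
      have h := G'_tt ((i : ℤ) + 1) 1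
      norm_num at h
      exact h
    calc (TT' 1 * TT' 0) ^ ((i : ℤ) + 1 - 1) * TT' 1
        = (TT' 1 * TT' 0) * ((TT' 1 * TT' 0) ^ ((i : ℤ) - 1) * TT' 1) := by
          rw [show (i:ℤ) + 1 - 1 = 1 + ((i:ℤ) - 1) by ring, zpow_add, zpow_one, mul_assoc]
      _ = (TT' 1 * TT' 0) * TT' i := by rw [ih]
      _ = TT' ((i : ℤ) + 1) * (TT' i * TT' i) := by rw [← hstep, mul_assoc]
      _ = TT' ((i : ℤ) + 1) := by rw [T2', mul_one]
  | pred i ih =>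
    have hstep : TT' (-(i : ℤ)) * TT' (-(i : ℤ) - 1) = TT' 1 * TT' 0 := by
      have h := G'_tt (-(i : ℤ)) 1
      norm_num at h
      exact h
    have hX : TT' (-(i : ℤ) - 1) = TT' (-(i : ℤ)) * (TT' 1 * TT' 0) := by
      rw [← one_mul (TT' (-(i:ℤ) - 1)), ← T2' (-(i:ℤ)), mul_assoc, hstep]
    rw [hX, ← ih]
    calc (TT' 1 * TT' 0) ^ (-(i:ℤ) - 1 - 1) * TT' 1
        = (TT' 1 * TT' 0) ^ (-(i:ℤ) - 1) * ((TT' 1 * TT' 0)⁻¹ * TT' 1) := by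
          rw [show -(i:ℤ) - 1 - 1 = (-(i:ℤ) - 1) + (-1) by ring, zpow_add, zpow_neg_one,
            mul_assoc]
      _ = (TT' 1 * TT' 0) ^ (-(i:ℤ) - 1) * TT' 0 := by
          rw [mul_inv_rev, inv_of_inv _ (T2' 0), inv_of_inv _ (T2' 1), mul_assoc, T2' 1,
            mul_one]
      _ = (TT' 1 * TT' 0) ^ (-(i:ℤ) - 1) * TT' 1 * (TT' 1 * TT' 0) := by
          rw [mul_assoc ((TT' 1 * TT' 0) ^ (-(i:ℤ) - 1)) (TT' 1)]
          congr 1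
          rw [← mul_assoc, T2' 1, one_mul]

-- the two maps
def fφ : GenG → HG' := Sum.elim (fun i : Fin 2 => TT' (i.val : ℤ)) fun j => SS' j
def fψ : GenG' → HG := Sum.elim (fun i : ℤ => (BB * AA) ^ (i - 1) * BB) fun j => SS j

lemma lift_fφ : ∀ r ∈ relsHypG, FreeGroup.lift fφ r = 1 := by
  rintro r (hr | ⟨x, rfl⟩)
  · rcases hr with ⟨i, j, hj, rfl⟩ | ⟨p, hp, rfl⟩ | ⟨j, hj, rfl⟩ |
      ⟨i, j, hne, h1, h2, rfl⟩ | ⟨i, j, hj, rfl⟩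
    · simp only [br, tG, sG, map_mul, map_inv, FreeGroup.lift_apply_of, fφ, Sum.elim_inl,
        Sum.elim_inr]
      exact inv_mul_eq_one.mpr (G'_braid_ts _ j hj)
    · simp only [br, sG, map_mul, map_inv, FreeGroup.lift_apply_of, fφ, Sum.elim_inr]
      exact inv_mul_eq_one.mpr (G'_braid_ss hp)
    · simp only [tG, sG, map_mul, map_inv, FreeGroup.lift_apply_of, fφ, Sum.elim_inl,
        Sum.elim_inr, Fin.val_one, Fin.val_zero, Nat.cast_one, Nat.cast_zero]
      refine inv_mul_eq_one.mpr ?_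
      simpa [mul_assoc] using G'_ell j hj
    · simp only [cm, sG, map_mul, map_inv, FreeGroup.lift_apply_of, fφ, Sum.elim_inr]
      exact inv_mul_eq_one.mpr (G'_cm_ss hne h1 h2)
    · simp only [cm, tG, sG, map_mul, map_inv, FreeGroup.lift_apply_of, fφ, Sum.elim_inl,
        Sum.elim_inr]
      exact inv_mul_eq_one.mpr (G'_cm_ts _ hj)
  · rcases x with i | j
    · simp only [map_pow, FreeGroup.lift_apply_of, fφ, Sum.elim_inl]
      rw [sq]
      exact T2' _
    · simp only [map_pow, FreeGroup.lift_apply_of, fφ, Sum.elim_inr]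
      rw [sq]
      exact S2' _

lemma lift_fψ : ∀ r ∈ relsHypG', FreeGroup.lift fψ r = 1 := by
  rintro r (hr | ⟨x, rfl⟩)
  · rcases hr with ⟨i, j, hj, rfl⟩ | ⟨i, j, rfl⟩ | ⟨p, hp, rfl⟩ |
      ⟨i, j, hne, h1, h2, rfl⟩ | ⟨i, j, hj, rfl⟩
    · simp only [br, tG', sG', map_mul, map_inv, FreeGroup.lift_apply_of, fψ, Sum.elim_inl,
        Sum.elim_inr]
      refine inv_mul_eq_one.mpr ?_
      exact braid_family AA BB (SS j) A2 B2 (S2 j) (G_braid_ts 0 j hj) (G_braid_ts 1 j hj)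
        (by simpa [mul_assoc] using G_ell j hj) (i - 1)
    · simp only [tG', map_mul, map_inv, FreeGroup.lift_apply_of, fψ, Sum.elim_inl]
      refine inv_mul_eq_one.mpr ?_
      rw [show i - 1 - 1 = i - 2 by ring, show j - 1 - 1 = j - 2 by ring]
      exact (tt_mul AA BB A2 B2 i).trans (tt_mul AA BB A2 B2 j).symm
    · simp only [br, sG', map_mul, map_inv, FreeGroup.lift_apply_of, fψ, Sum.elim_inr]
      exact inv_mul_eq_one.mpr (G_braid_ss hp)
    · simp only [cm, sG', map_mul, map_inv, FreeGroup.lift_apply_of, fψ, Sum.elim_inr]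
      exact inv_mul_eq_one.mpr (G_cm_ss hne h1 h2)
    · simp only [cm, tG', sG', map_mul, map_inv, FreeGroup.lift_apply_of, fψ, Sum.elim_inl,
        Sum.elim_inr]
      refine inv_mul_eq_one.mpr ?_
      exact tt_comm AA BB (SS j) (G_cm_ts 0 hj) (G_cm_ts 1 hj) (i - 1)
  · rcases x with i | j
    · simp only [map_pow, FreeGroup.lift_apply_of, fψ, Sum.elim_inl]
      rw [sq]
      exact tt_sq AA BB A2 B2 (i - 1)
    · simp only [map_pow, FreeGroup.lift_apply_of, fψ, Sum.elim_inr]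
      rw [sq]
      exact S2 _

def φ : HG →* HG' := PresentedGroup.toGroup lift_fφ
def ψ : HG' →* HG := PresentedGroup.toGroup lift_fψ

lemma comp_ψφ : ψ.comp φ = MonoidHom.id HG := by
  apply PresentedGroup.ext
  rintro (i | j)
  · have h1 : (ψ.comp φ) (PresentedGroup.of (Sum.inl i)) =
        (BB * AA) ^ ((i.val : ℤ) - 1) * BB := by
      simp only [MonoidHom.comp_apply, φ, ψ, PresentedGroup.toGroup.of, fφ, Sum.elim_inl,
        TT', fψ]
    rw [h1, MonoidHom.id_apply]
    fin_cases i
    · show (BB * AA) ^ (((0:Fin 2).val : ℤ) - 1) * BB = PresentedGroup.of (Sum.inl 0)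
      have h0 : (((0:Fin 2).val : ℤ)) - 1 = -1 := by norm_num
      rw [h0, zpow_neg_one, mul_inv_rev, inv_of_inv _ A2, inv_of_inv _ B2, mul_assoc, B2,
        mul_one]
      rfl
    · show (BB * AA) ^ (((1:Fin 2).val : ℤ) - 1) * BB = PresentedGroup.of (Sum.inl 1)
      have h0 : (((1:Fin 2).val : ℤ)) - 1 = 0 := by norm_num
      rw [h0, zpow_zero, one_mul]
      rfl
  · simp only [MonoidHom.comp_apply, MonoidHom.id_apply, φ, ψ, PresentedGroup.toGroup.of,
      fφ, fψ, Sum.elim_inr, SS, SS']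


lemma comp_φψ : φ.comp ψ = MonoidHom.id HG' := by
  apply PresentedGroup.ext
  rintro (i | j)
  · have h1 : (φ.comp ψ) (PresentedGroup.of (Sum.inl i)) =
        φ ((BB * AA) ^ ((i : ℤ) - 1) * BB) := by
      simp only [MonoidHom.comp_apply, ψ, PresentedGroup.toGroup.of, fψ, Sum.elim_inl]
    rw [h1, MonoidHom.id_apply, map_mul, map_zpow, map_mul]
    have hB : φ BB = TT' 1 := by
      simp [φ, BB, PresentedGroup.toGroup.of, fφ]
    have hA : φ AA = TT' 0 := by
      simp [φ, AA, PresentedGroup.toGroup.of, fφ]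
    rw [hB, hA]
    exact G'_T_eq i
  · simp only [MonoidHom.comp_apply, MonoidHom.id_apply, φ, ψ, PresentedGroup.toGroup.of,
      fφ, fψ, Sum.elim_inr, SS, SS']

theorem Hyp_iso : Nonempty (PresentedGroup relsHypG ≃* PresentedGroup relsHypG') := by
  exact ⟨MonoidHom.toMulEquiv φ ψ comp_ψφ comp_φψ⟩

end EllipticE7Hyp
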